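/- Let 0 ≤ d ≤ 1, R, k ∈ ℕ, h' ∈ ℤ with gcd(h',k) = 1, and α₁, α₂ ∈ {0,1,…,R−1}. Then there is an absolute constant C such that for all w ∈ ℂ with Re(w) ≥ 1: | e^{−2πid(h'/k + iw)} f_{R,α}(h'/k + iw) − (δ_{0 < α₁α₂ < Rd}/2) e^{2π(d − α₁α₂/R)(w − ih'/k)} + (δ_{(R−α₁)(R−α₂) < Rd}/2) e^{2π(d − (R−α₁)(R−α₂)/R)(w − ih'/k)} | ≤ C. -/

import Mathlib

open scoped Real
open Filter MeasureTheory

noncomputable section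

/-- `q^x = e^{2πiτx}` for real exponents. -/
def qpow (τ : ℂ) (x : ℝ) : ℂ := Complex.exp (2*π*Complex.I*τ*x)

/-- the indefinite theta function `f_{R,α}` -/
def fInd (R : ℕ) (α : ℤ × ℤ) (τ : ℂ) : ℂ :=
  (1/4) * ∑' m : ℤ × ℤ,
    (if ((m.1 : ℝ) + (α.1:ℝ)/R) ≠ 0 ∧ ((m.2 : ℝ) + (α.2:ℝ)/R) ≠ 0 then
      ((Real.sign ((m.1 : ℝ) + (α.1:ℝ)/R) + Real.sign ((m.2 : ℝ) + (α.2:ℝ)/R) : ℝ) : ℂ)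
        * qpow τ ((R:ℝ) * ((m.1 : ℝ) + (α.1:ℝ)/R) * ((m.2 : ℝ) + (α.2:ℝ)/R))
    else 0)

def Fterm (R α₁ α₂ : ℕ) (τ : ℂ) (m : ℤ × ℤ) : ℂ :=
  if ((m.1 : ℝ) + (α₁:ℝ)/R) ≠ 0 ∧ ((m.2 : ℝ) + (α₂:ℝ)/R) ≠ 0 then
    ((Real.sign ((m.1 : ℝ) + (α₁:ℝ)/R) + Real.sign ((m.2 : ℝ) + (α₂:ℝ)/R) : ℝ) : ℂ)
      * qpow τ ((R:ℝ) * ((m.1 : ℝ) + (α₁:ℝ)/R) * ((m.2 : ℝ) + (α₂:ℝ)/R))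
  else 0

def Gfun (R α₁ α₂ : ℕ) (d : ℝ) (τ : ℂ) (m : ℤ × ℤ) : ℂ :=
  if m = (0,0) ∨ m = (-1,-1) then 0
  else Complex.exp (-(2*π*Complex.I*d*τ)) * Fterm R α₁ α₂ τ m

lemma abs_qpow (τ : ℂ) (x : ℝ) :
    ‖qpow τ x‖ = Real.exp (-(2 * π * x * τ.im)) := by
  rw [qpow, Complex.norm_exp]
  congr 1
  simp [Complex.mul_re, Complex.mul_im]
  ring

lemma abs_cfac (d : ℝ) (τ : ℂ) :
    ‖Complex.exp (-(2*π*Complex.I*d*τ))‖ = Real.exp (2*π*d*τ.im) := by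
  rw [Complex.norm_exp]
  congr 1
  simp [Complex.mul_re, Complex.mul_im]

lemma abs_c_qpow (d e : ℝ) (τ : ℂ) (h : d ≤ e) (him : 0 ≤ τ.im) :
    ‖Complex.exp (-(2*π*Complex.I*d*τ)) * qpow τ e‖ ≤ 1 := by
  rw [norm_mul, abs_cfac, abs_qpow, ← Real.exp_add]
  calc Real.exp (2*π*d*τ.im + -(2*π*e*τ.im)) ≤ Real.exp 0 := by
        apply Real.exp_le_exp.2
        nlinarith [Real.pi_pos, mul_nonneg (sub_nonneg.2 h) him]
    _ = 1 := Real.exp_zero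

lemma c_mul_qpow (d e : ℝ) (u w : ℂ) :
    Complex.exp (-(2*π*Complex.I*d*(u + Complex.I*w))) * qpow (u + Complex.I*w) e
      = Complex.exp (2*π*((d:ℂ) - (e:ℂ))*(w - Complex.I*u)) := by
  rw [qpow, ← Complex.exp_add]
  congr 1
  linear_combination (2*(π:ℂ)*((e:ℂ) - (d:ℂ))*w) * Complex.I_sq

lemma sign_abs_le (y : ℝ) : |Real.sign y| ≤ 1 := by
  rcases lt_trichotomy y 0 with h | h | h
  · simp [Real.sign_of_neg h]
  · simp [h, Real.sign_zero]
  · simp [Real.sign_of_pos h]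

lemma pos_facts (R α : ℕ) (hR : 1 ≤ R) (hα : α < R) (mi : ℤ)
    (hpos : 0 < (mi : ℝ) + α / R) :
    0 ≤ mi ∧ 1 ≤ (R : ℝ) * ((mi : ℝ) + α / R) ∧ (mi : ℝ) ≤ (mi : ℝ) + α / R := by
  have hRpos : (0 : ℝ) < R := by positivity
  have ha0 : (0 : ℝ) ≤ (α : ℝ) / R := by positivity
  have ha1 : (α : ℝ) / R < 1 := by
    rw [div_lt_one hRpos]; exact_mod_cast hα
  have hm0 : 0 ≤ mi := by
    by_contra h
    push_neg at h
    have h2 : mi ≤ -1 := by omega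
    have : (mi : ℝ) ≤ -1 := by exact_mod_cast h2
    linarith
  refine ⟨hm0, ?_, by linarith⟩
  rcases eq_or_lt_of_le hm0 with h | h
  · have hα0 : 0 < α := by
      by_contra h0
      push_neg at h0
      interval_cases α
      simp [← h] at hpos
    have h1α : (1 : ℝ) ≤ α := by exact_mod_cast hα0
    have : (R : ℝ) * ((mi : ℝ) + α / R) = α := by
      rw [← h]; field_simp; simp
    rw [this]; exact h1α
  · have h1 : (1 : ℝ) ≤ (mi : ℝ) := by exact_mod_cast h
    have hR1 : (1 : ℝ) ≤ R := by exact_mod_cast hR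
    nlinarith

lemma neg_facts (R α : ℕ) (hR : 1 ≤ R) (hα : α < R) (mi : ℤ)
    (hneg : (mi : ℝ) + α / R < 0) :
    mi ≤ -1 ∧ 1 ≤ (R : ℝ) * (-((mi : ℝ) + α / R)) ∧
      (-(mi : ℝ) - 1) ≤ -((mi : ℝ) + α / R) := by
  have hRpos : (0 : ℝ) < R := by positivity
  have ha0 : (0 : ℝ) ≤ (α : ℝ) / R := by positivity
  have ha1 : (α : ℝ) / R < 1 := by
    rw [div_lt_one hRpos]; exact_mod_cast hα
  have hm : mi ≤ -1 := by
    by_contra h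
    push_neg at h
    have : (0 : ℝ) ≤ (mi : ℝ) := by exact_mod_cast h
    linarith
  have hmr : (mi : ℝ) ≤ -1 := by exact_mod_cast hm
  refine ⟨hm, ?_, by linarith⟩
  have hαR : (α : ℝ) + 1 ≤ R := by exact_mod_cast hα
  have hd : (R : ℝ) * ((α:ℝ)/R) = α := by field_simp
  nlinarith

set_option maxHeartbeats 2000000 in
lemma key_ineq (R : ℕ) (hR : 1 ≤ R) (α₁ α₂ : ℕ) (h1 : α₁ < R) (h2 : α₂ < R)
    (m : ℤ × ℤ) (hm0 : m ≠ (0, 0)) (hm1 : m ≠ (-1, -1))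
    (hx1 : ((m.1 : ℝ) + α₁ / R) ≠ 0) (hx2 : ((m.2 : ℝ) + α₂ / R) ≠ 0)
    (hs : Real.sign ((m.1 : ℝ) + α₁ / R) + Real.sign ((m.2 : ℝ) + α₂ / R) ≠ 0) :
    1 ≤ (R : ℝ) * ((m.1 : ℝ) + α₁ / R) * ((m.2 : ℝ) + α₂ / R) ∧
      ((m.1.natAbs : ℝ) + m.2.natAbs) / 4 ≤
        (R : ℝ) * ((m.1 : ℝ) + α₁ / R) * ((m.2 : ℝ) + α₂ / R) := by
  have hR1 : (1 : ℝ) ≤ R := by exact_mod_cast hR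
  have hsame : (0 < ((m.1 : ℝ) + (α₁:ℝ) / (R:ℝ)) ∧ 0 < ((m.2 : ℝ) + (α₂:ℝ) / (R:ℝ))) ∨ (((m.1 : ℝ) + (α₁:ℝ) / (R:ℝ)) < 0 ∧ ((m.2 : ℝ) + (α₂:ℝ) / (R:ℝ)) < 0) := by
    rcases lt_trichotomy ((m.1 : ℝ) + (α₁:ℝ) / (R:ℝ)) 0 with p1 | p1 | p1 <;>
      rcases lt_trichotomy ((m.2 : ℝ) + (α₂:ℝ) / (R:ℝ)) 0 with p2 | p2 | p2
    · exact Or.inr ⟨p1, p2⟩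
    · exact absurd p2 hx2
    · exact absurd (by rw [Real.sign_of_neg p1, Real.sign_of_pos p2]; ring) hs
    · exact absurd p1 hx1
    · exact absurd p1 hx1
    · exact absurd p1 hx1
    · exact absurd (by rw [Real.sign_of_pos p1, Real.sign_of_neg p2]; ring) hs
    · exact absurd p2 hx2
    · exact Or.inl ⟨p1, p2⟩
  rcases hsame with ⟨p1, p2⟩ | ⟨p1, p2⟩
  · obtain ⟨hm10, hRx1, hmx1⟩ := pos_facts R α₁ hR h1 m.1 p1
    obtain ⟨hm20, hRx2, hmx2⟩ := pos_facts R α₂ hR h2 m.2 p2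
    have hna1 : (m.1.natAbs : ℝ) = (m.1 : ℝ) := by
      have h : (m.1.natAbs : ℤ) = m.1 := by omega
      calc (m.1.natAbs : ℝ) = ((m.1.natAbs : ℤ) : ℝ) := (Int.cast_natCast m.1.natAbs).symm
        _ = ((m.1 : ℤ) : ℝ) := by rw [h]
        _ = (m.1 : ℝ) := by push_cast; ring
    have hna2 : (m.2.natAbs : ℝ) = (m.2 : ℝ) := by
      have h : (m.2.natAbs : ℤ) = m.2 := by omega
      calc (m.2.natAbs : ℝ) = ((m.2.natAbs : ℤ) : ℝ) := (Int.cast_natCast m.2.natAbs).symm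
        _ = ((m.2 : ℤ) : ℝ) := by rw [h]
        _ = (m.2 : ℝ) := by push_cast; ring
    have hone : (1:ℝ) ≤ (m.1:ℝ) ∨ (1:ℝ) ≤ (m.2:ℝ) := by
      have hne : ¬(m.1 = 0 ∧ m.2 = 0) := by
        intro h; exact hm0 (Prod.ext h.1 h.2)
      have h : 1 ≤ m.1 ∨ 1 ≤ m.2 := by omega
      rcases h with h | h
      · exact Or.inl (by exact_mod_cast h)
      · exact Or.inr (by exact_mod_cast h)
    have hm10r : (0:ℝ) ≤ (m.1:ℝ) := by exact_mod_cast hm10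
    have hm20r : (0:ℝ) ≤ (m.2:ℝ) := by exact_mod_cast hm20
    have hA : 0 ≤ ((m.1 : ℝ) + (α₁:ℝ) / (R:ℝ)) * ((R:ℝ) * ((m.2 : ℝ) + (α₂:ℝ) / (R:ℝ)) - 1) := mul_nonneg p1.le (by linarith)
    have hB : 0 ≤ ((m.2 : ℝ) + (α₂:ℝ) / (R:ℝ)) * ((R:ℝ) * ((m.1 : ℝ) + (α₁:ℝ) / (R:ℝ)) - 1) := mul_nonneg p2.le (by linarith)
    have part1 : 1 ≤ (R:ℝ) * ((m.1 : ℝ) + (α₁:ℝ) / (R:ℝ)) * ((m.2 : ℝ) + (α₂:ℝ) / (R:ℝ)) := by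
      rcases hone with h | h <;> nlinarith [hA, hB]
    refine ⟨part1, ?_⟩
    rw [hna1, hna2]
    have hC : ((m.1 : ℝ) + (α₁:ℝ) / (R:ℝ)) ≤ (R:ℝ) * ((m.1 : ℝ) + (α₁:ℝ) / (R:ℝ)) * ((m.2 : ℝ) + (α₂:ℝ) / (R:ℝ)) := by nlinarith [hA]
    have hD : ((m.2 : ℝ) + (α₂:ℝ) / (R:ℝ)) ≤ (R:ℝ) * ((m.1 : ℝ) + (α₁:ℝ) / (R:ℝ)) * ((m.2 : ℝ) + (α₂:ℝ) / (R:ℝ)) := by nlinarith [hB]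
    linarith [part1, hmx1, hmx2, hC, hD]
  · obtain ⟨hm1', hRx1, hmx1⟩ := neg_facts R α₁ hR h1 m.1 p1
    obtain ⟨hm2', hRx2, hmx2⟩ := neg_facts R α₂ hR h2 m.2 p2
    have hna1 : (m.1.natAbs : ℝ) = -(m.1 : ℝ) := by
      have h : (m.1.natAbs : ℤ) = -m.1 := by omega
      calc (m.1.natAbs : ℝ) = ((m.1.natAbs : ℤ) : ℝ) := (Int.cast_natCast m.1.natAbs).symm
        _ = ((-m.1 : ℤ) : ℝ) := by rw [h]
        _ = -(m.1 : ℝ) := by push_cast; ring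
    have hna2 : (m.2.natAbs : ℝ) = -(m.2 : ℝ) := by
      have h : (m.2.natAbs : ℤ) = -m.2 := by omega
      calc (m.2.natAbs : ℝ) = ((m.2.natAbs : ℤ) : ℝ) := (Int.cast_natCast m.2.natAbs).symm
        _ = ((-m.2 : ℤ) : ℝ) := by rw [h]
        _ = -(m.2 : ℝ) := by push_cast; ring
    have hone : (m.1:ℝ) ≤ -2 ∨ (m.2:ℝ) ≤ -2 := by
      have hne : ¬(m.1 = -1 ∧ m.2 = -1) := by
        intro h; exact hm1 (Prod.ext h.1 h.2)
      have h : m.1 ≤ -2 ∨ m.2 ≤ -2 := by omega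
      rcases h with h | h
      · exact Or.inl (by exact_mod_cast h)
      · exact Or.inr (by exact_mod_cast h)
    have hm1r : (m.1:ℝ) ≤ -1 := by exact_mod_cast hm1'
    have hm2r : (m.2:ℝ) ≤ -1 := by exact_mod_cast hm2'
    have hA : 0 ≤ (-((m.1 : ℝ) + (α₁:ℝ) / (R:ℝ))) * ((R:ℝ) * (-((m.2 : ℝ) + (α₂:ℝ) / (R:ℝ))) - 1) := mul_nonneg (by linarith) (by linarith)
    have hB : 0 ≤ (-((m.2 : ℝ) + (α₂:ℝ) / (R:ℝ))) * ((R:ℝ) * (-((m.1 : ℝ) + (α₁:ℝ) / (R:ℝ))) - 1) := mul_nonneg (by linarith) (by linarith)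
    have part1 : 1 ≤ (R:ℝ) * ((m.1 : ℝ) + (α₁:ℝ) / (R:ℝ)) * ((m.2 : ℝ) + (α₂:ℝ) / (R:ℝ)) := by
      rcases hone with h | h <;> nlinarith [hA, hB]
    refine ⟨part1, ?_⟩
    rw [hna1, hna2]
    have hC : -((m.1 : ℝ) + (α₁:ℝ) / (R:ℝ)) ≤ (R:ℝ) * ((m.1 : ℝ) + (α₁:ℝ) / (R:ℝ)) * ((m.2 : ℝ) + (α₂:ℝ) / (R:ℝ)) := by nlinarith [hA]
    have hD : -((m.2 : ℝ) + (α₂:ℝ) / (R:ℝ)) ≤ (R:ℝ) * ((m.1 : ℝ) + (α₁:ℝ) / (R:ℝ)) * ((m.2 : ℝ) + (α₂:ℝ) / (R:ℝ)) := by nlinarith [hB]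
    linarith [part1, hmx1, hmx2, hC, hD]

lemma fInd_eq (R α₁ α₂ : ℕ) (τ : ℂ) :
    fInd R ((α₁:ℤ),(α₂:ℤ)) τ = (1/4) * ∑' m : ℤ × ℤ, Fterm R α₁ α₂ τ m := by
  simp only [fInd, Fterm, Int.cast_natCast]

lemma Fterm_zero_eval (R α₁ α₂ : ℕ) (hR : 1 ≤ R) (τ : ℂ) (hα : α₁ ≠ 0) (hβ : α₂ ≠ 0) :
    Fterm R α₁ α₂ τ (0,0) = 2 * qpow τ ((α₁*α₂:ℝ)/R) := by
  have hRpos : (0:ℝ) < R := by positivity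
  have ha : (0:ℝ) < (α₁:ℝ)/R := by
    apply div_pos _ hRpos
    exact_mod_cast Nat.pos_of_ne_zero hα
  have hb : (0:ℝ) < (α₂:ℝ)/R := by
    apply div_pos _ hRpos
    exact_mod_cast Nat.pos_of_ne_zero hβ
  rw [Fterm]
  simp only [Int.cast_zero, zero_add]
  rw [if_pos ⟨ne_of_gt ha, ne_of_gt hb⟩, Real.sign_of_pos ha, Real.sign_of_pos hb]
  have harg : (R:ℝ) * ((α₁:ℝ)/R) * ((α₂:ℝ)/R) = (α₁*α₂:ℝ)/R := by
    field_simp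
  rw [harg]
  norm_num

lemma Fterm_zero_zero (R α₁ α₂ : ℕ) (τ : ℂ) (hα : α₁ = 0 ∨ α₂ = 0) :
    Fterm R α₁ α₂ τ (0,0) = 0 := by
  rw [Fterm]
  rcases hα with h | h <;> subst h <;>
    simp

lemma Fterm_negone_eval (R α₁ α₂ : ℕ) (hR : 1 ≤ R) (h1 : α₁ < R) (h2 : α₂ < R) (τ : ℂ) :
    Fterm R α₁ α₂ τ (-1,-1) = -2 * qpow τ (((R:ℝ)-α₁)*((R:ℝ)-α₂)/R) := by
  have hRpos : (0:ℝ) < R := by positivity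
  have h1r : (α₁:ℝ) < R := by exact_mod_cast h1
  have h2r : (α₂:ℝ) < R := by exact_mod_cast h2
  have ha : ((-1:ℤ):ℝ) + (α₁:ℝ)/R < 0 := by
    push_cast
    have : (α₁:ℝ)/R < 1 := by rw [div_lt_one hRpos]; exact h1r
    linarith
  have hb : ((-1:ℤ):ℝ) + (α₂:ℝ)/R < 0 := by
    push_cast
    have : (α₂:ℝ)/R < 1 := by rw [div_lt_one hRpos]; exact h2r
    linarith
  rw [Fterm]
  simp only []
  rw [if_pos ⟨ne_of_lt ha, ne_of_lt hb⟩, Real.sign_of_neg ha, Real.sign_of_neg hb]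
  have harg : (R:ℝ) * (((-1:ℤ):ℝ) + (α₁:ℝ)/R) * (((-1:ℤ):ℝ) + (α₂:ℝ)/R)
      = ((R:ℝ)-α₁)*((R:ℝ)-α₂)/R := by
    push_cast
    field_simp
    ring
  rw [harg]
  norm_num

set_option maxHeartbeats 1000000 in
lemma term_bound (d : ℝ) (hd0 : 0 ≤ d) (hd1 : d ≤ 1) (R : ℕ) (hR : 1 ≤ R)
    (α₁ α₂ : ℕ) (h1 : α₁ < R) (h2 : α₂ < R) (τ : ℂ) (hτ : 1 ≤ τ.im)
    (m : ℤ × ℤ) (hm0 : m ≠ (0, 0)) (hm1 : m ≠ (-1, -1)) :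
    ‖Complex.exp (-(2*π*Complex.I*d*τ)) * Fterm R α₁ α₂ τ m‖
      ≤ 2 * Real.exp (2*π) *
        (Real.exp (-(π/2)) ^ m.1.natAbs * Real.exp (-(π/2)) ^ m.2.natAbs) := by
  have hτ0 : 0 ≤ τ.im := by linarith
  rw [Fterm]
  by_cases hcond : ((m.1 : ℝ) + (α₁:ℝ)/R) ≠ 0 ∧ ((m.2 : ℝ) + (α₂:ℝ)/R) ≠ 0
  · rw [if_pos hcond]
    by_cases hsgn : Real.sign ((m.1 : ℝ) + (α₁:ℝ)/R) + Real.sign ((m.2 : ℝ) + (α₂:ℝ)/R) = 0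
    · rw [hsgn]
      simp only [Complex.ofReal_zero, zero_mul, mul_zero, norm_zero]
      positivity
    · obtain ⟨hX1, hX2⟩ := key_ineq R hR α₁ α₂ h1 h2 m hm0 hm1 hcond.1 hcond.2 hsgn
      have hXd : d ≤ (R:ℝ) * ((m.1 : ℝ) + (α₁:ℝ)/R) * ((m.2 : ℝ) + (α₂:ℝ)/R) :=
        hd1.trans hX1
      have hsb : |Real.sign ((m.1 : ℝ) + (α₁:ℝ)/R) + Real.sign ((m.2 : ℝ) + (α₂:ℝ)/R)| ≤ 2 := by
        calc |Real.sign ((m.1 : ℝ) + (α₁:ℝ)/R) + Real.sign ((m.2 : ℝ) + (α₂:ℝ)/R)|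
            ≤ |Real.sign ((m.1 : ℝ) + (α₁:ℝ)/R)| + |Real.sign ((m.2 : ℝ) + (α₂:ℝ)/R)| :=
              abs_add_le _ _
          _ ≤ 2 := by linarith [sign_abs_le ((m.1 : ℝ) + (α₁:ℝ)/R), sign_abs_le ((m.2 : ℝ) + (α₂:ℝ)/R)]
      have harg : 2*π*d*τ.im + -(2*π*((R:ℝ) * ((m.1 : ℝ) + (α₁:ℝ)/R) * ((m.2 : ℝ) + (α₂:ℝ)/R))*τ.im)
          ≤ 2*π + (-(π/2)*(m.1.natAbs:ℝ) + -(π/2)*(m.2.natAbs:ℝ)) := by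
        have key1 : 0 ≤ 2*π*(((R:ℝ) * ((m.1 : ℝ) + (α₁:ℝ)/R) * ((m.2 : ℝ) + (α₂:ℝ)/R)) - d)*(τ.im - 1) := by
          apply mul_nonneg (mul_nonneg (by positivity) (by linarith)) (by linarith)
        have key2 : 0 ≤ π*(((R:ℝ) * ((m.1 : ℝ) + (α₁:ℝ)/R) * ((m.2 : ℝ) + (α₂:ℝ)/R)) - ((m.1.natAbs:ℝ) + m.2.natAbs)/4) :=
          mul_nonneg Real.pi_pos.le (by linarith)
        have key3 : 0 ≤ 2*π*(1 - d) := mul_nonneg (by positivity) (by linarith)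
        nlinarith [key1, key2, key3]
      calc ‖Complex.exp (-(2*π*Complex.I*d*τ)) *
              (((Real.sign ((m.1 : ℝ) + (α₁:ℝ)/R) + Real.sign ((m.2 : ℝ) + (α₂:ℝ)/R) : ℝ) : ℂ)
                * qpow τ ((R:ℝ) * ((m.1 : ℝ) + (α₁:ℝ)/R) * ((m.2 : ℝ) + (α₂:ℝ)/R)))‖
          = Real.exp (2*π*d*τ.im) *
              (|Real.sign ((m.1 : ℝ) + (α₁:ℝ)/R) + Real.sign ((m.2 : ℝ) + (α₂:ℝ)/R)| *
                Real.exp (-(2*π*((R:ℝ) * ((m.1 : ℝ) + (α₁:ℝ)/R) * ((m.2 : ℝ) + (α₂:ℝ)/R))*τ.im))) := by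
            rw [norm_mul, norm_mul, abs_cfac, Complex.norm_real, Real.norm_eq_abs, abs_qpow]
        _ ≤ Real.exp (2*π*d*τ.im) *
              (2 * Real.exp (-(2*π*((R:ℝ) * ((m.1 : ℝ) + (α₁:ℝ)/R) * ((m.2 : ℝ) + (α₂:ℝ)/R))*τ.im))) := by
            gcongr
        _ = 2 * Real.exp (2*π*d*τ.im + -(2*π*((R:ℝ) * ((m.1 : ℝ) + (α₁:ℝ)/R) * ((m.2 : ℝ) + (α₂:ℝ)/R))*τ.im)) := by
            rw [Real.exp_add]; ring
        _ ≤ 2 * Real.exp (2*π + (-(π/2)*(m.1.natAbs:ℝ) + -(π/2)*(m.2.natAbs:ℝ))) := by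
            have := Real.exp_le_exp.2 harg
            linarith
        _ = 2 * Real.exp (2*π) *
              (Real.exp (-(π/2)) ^ m.1.natAbs * Real.exp (-(π/2)) ^ m.2.natAbs) := by
            rw [Real.exp_add, Real.exp_add, ← Real.exp_nat_mul, ← Real.exp_nat_mul]
            ring
  · rw [if_neg hcond]
    simp only [mul_zero, norm_zero]
    positivity

set_option maxHeartbeats 1000000 in
lemma maj_summable : Summable (fun m : ℤ × ℤ =>
    Real.exp (-(π/2)) ^ m.1.natAbs * Real.exp (-(π/2)) ^ m.2.natAbs) := by
  have hr0 : (0:ℝ) ≤ Real.exp (-(π/2)) := (Real.exp_pos _).le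
  have hr1 : Real.exp (-(π/2)) < 1 := by
    calc Real.exp (-(π/2)) < Real.exp 0 :=
          Real.exp_lt_exp.2 (by linarith [Real.pi_pos])
      _ = 1 := Real.exp_zero
  have hg : Summable (fun n : ℤ => Real.exp (-(π/2)) ^ n.natAbs) := by
    apply Summable.of_nat_of_neg <;> simpa using summable_geometric_of_lt_one hr0 hr1
  have hgn : Summable (fun n : ℤ => ‖Real.exp (-(π/2)) ^ n.natAbs‖) := by
    simpa [Real.norm_eq_abs, abs_pow, abs_of_nonneg hr0] using hg
  exact summable_mul_of_summable_norm hgn hgn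

lemma G_bound (d : ℝ) (hd0 : 0 ≤ d) (hd1 : d ≤ 1) (R : ℕ) (hR : 1 ≤ R)
    (α₁ α₂ : ℕ) (h1 : α₁ < R) (h2 : α₂ < R) (τ : ℂ) (hτ : 1 ≤ τ.im) :
    ∀ m : ℤ × ℤ, ‖Gfun R α₁ α₂ d τ m‖ ≤ 2 * Real.exp (2*π) *
      (Real.exp (-(π/2)) ^ m.1.natAbs * Real.exp (-(π/2)) ^ m.2.natAbs) := by
  intro m
  rw [Gfun]
  split_ifs with h
  · simp only [norm_zero]
    positivity
  · push_neg at h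
    exact term_bound d hd0 hd1 R hR α₁ α₂ h1 h2 τ hτ m h.1 h.2

lemma G_summable (d : ℝ) (hd0 : 0 ≤ d) (hd1 : d ≤ 1) (R : ℕ) (hR : 1 ≤ R)
    (α₁ α₂ : ℕ) (h1 : α₁ < R) (h2 : α₂ < R) (τ : ℂ) (hτ : 1 ≤ τ.im) :
    Summable (Gfun R α₁ α₂ d τ) :=
  Summable.of_norm_bounded (maj_summable.mul_left _)
    (G_bound d hd0 hd1 R hR α₁ α₂ h1 h2 τ hτ)

lemma abs_tsum_G_le (d : ℝ) (hd0 : 0 ≤ d) (hd1 : d ≤ 1) (R : ℕ) (hR : 1 ≤ R)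
    (α₁ α₂ : ℕ) (h1 : α₁ < R) (h2 : α₂ < R) (τ : ℂ) (hτ : 1 ≤ τ.im) :
    ‖∑' m : ℤ × ℤ, Gfun R α₁ α₂ d τ m‖ ≤ 2 * Real.exp (2*π) *
      ∑' m : ℤ × ℤ, (Real.exp (-(π/2)) ^ m.1.natAbs * Real.exp (-(π/2)) ^ m.2.natAbs) := by
  have hbnd := G_bound d hd0 hd1 R hR α₁ α₂ h1 h2 τ hτ
  have hnorm : Summable (fun m : ℤ × ℤ => ‖Gfun R α₁ α₂ d τ m‖) :=
    Summable.of_nonneg_of_le (fun m => norm_nonneg _) hbnd (maj_summable.mul_left _)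
  calc ‖∑' m : ℤ × ℤ, Gfun R α₁ α₂ d τ m‖
      = ‖∑' m : ℤ × ℤ, Gfun R α₁ α₂ d τ m‖ := rfl
    _ ≤ ∑' m : ℤ × ℤ, ‖Gfun R α₁ α₂ d τ m‖ := norm_tsum_le_tsum_norm hnorm
    _ ≤ ∑' m : ℤ × ℤ, 2 * Real.exp (2*π) *
          (Real.exp (-(π/2)) ^ m.1.natAbs * Real.exp (-(π/2)) ^ m.2.natAbs) :=
        Summable.tsum_le_tsum hbnd hnorm (maj_summable.mul_left _)
    _ = 2 * Real.exp (2*π) *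
          ∑' m : ℤ × ℤ, (Real.exp (-(π/2)) ^ m.1.natAbs * Real.exp (-(π/2)) ^ m.2.natAbs) :=
        tsum_mul_left

lemma H_summable (d : ℝ) (hd0 : 0 ≤ d) (hd1 : d ≤ 1) (R : ℕ) (hR : 1 ≤ R)
    (α₁ α₂ : ℕ) (h1 : α₁ < R) (h2 : α₂ < R) (τ : ℂ) (hτ : 1 ≤ τ.im) :
    Summable (fun m : ℤ × ℤ => Complex.exp (-(2*π*Complex.I*d*τ)) * Fterm R α₁ α₂ τ m) := by
  classical
  have hH : (fun m : ℤ × ℤ => Complex.exp (-(2*π*Complex.I*d*τ)) * Fterm R α₁ α₂ τ m)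
      = fun m => Gfun R α₁ α₂ d τ m +
          ((if m = ((0,0) : ℤ × ℤ) then Complex.exp (-(2*π*Complex.I*d*τ)) * Fterm R α₁ α₂ τ (0,0) else 0)
            + (if m = ((-1,-1) : ℤ × ℤ) then Complex.exp (-(2*π*Complex.I*d*τ)) * Fterm R α₁ α₂ τ (-1,-1) else 0)) := by
    funext m
    have e0 : Gfun R α₁ α₂ d τ (0,0) = 0 := by simp [Gfun]
    have e1 : Gfun R α₁ α₂ d τ (-1,-1) = 0 := by simp [Gfun]
    rcases eq_or_ne m ((0,0) : ℤ × ℤ) with h | h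
    · subst h
      rw [e0, if_pos rfl, if_neg (by norm_num [Prod.ext_iff] : ¬((0,0) : ℤ × ℤ) = ((-1,-1) : ℤ × ℤ))]
      ring
    · rcases eq_or_ne m ((-1,-1) : ℤ × ℤ) with h2 | h2
      · subst h2
        rw [e1, if_pos rfl, if_neg (by norm_num [Prod.ext_iff] : ¬((-1,-1) : ℤ × ℤ) = ((0,0) : ℤ × ℤ))]
        ring
      · rw [if_neg h, if_neg h2, show Gfun R α₁ α₂ d τ m = Complex.exp (-(2*π*Complex.I*d*τ)) * Fterm R α₁ α₂ τ m from by rw [Gfun, if_neg (by tauto)]]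
        ring
  rw [hH]
  exact (G_summable d hd0 hd1 R hR α₁ α₂ h1 h2 τ hτ).add
    (((hasSum_ite_eq ((0,0) : ℤ × ℤ) _).summable).add
      ((hasSum_ite_eq ((-1,-1) : ℤ × ℤ) _).summable))

lemma tsum_split (d : ℝ) (R α₁ α₂ : ℕ) (τ : ℂ)
    (hsum : Summable (fun m : ℤ × ℤ => Complex.exp (-(2*π*Complex.I*d*τ)) * Fterm R α₁ α₂ τ m)) :
    ∑' m : ℤ × ℤ, Complex.exp (-(2*π*Complex.I*d*τ)) * Fterm R α₁ α₂ τ m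
      = Complex.exp (-(2*π*Complex.I*d*τ)) * Fterm R α₁ α₂ τ (0,0)
        + Complex.exp (-(2*π*Complex.I*d*τ)) * Fterm R α₁ α₂ τ (-1,-1)
        + ∑' m : ℤ × ℤ, Gfun R α₁ α₂ d τ m := by
  classical
  rw [Summable.tsum_eq_add_tsum_ite hsum ((0,0) : ℤ × ℤ)]
  have hupd : Summable (fun m : ℤ × ℤ =>
      if m = ((0,0) : ℤ × ℤ) then 0 else Complex.exp (-(2*π*Complex.I*d*τ)) * Fterm R α₁ α₂ τ m) := by
    have h0 := hsum.update ((0,0) : ℤ × ℤ) 0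
    have heq : Function.update (fun m : ℤ × ℤ => Complex.exp (-(2*π*Complex.I*d*τ)) * Fterm R α₁ α₂ τ m) ((0,0) : ℤ × ℤ) 0
        = fun m : ℤ × ℤ => if m = ((0,0) : ℤ × ℤ) then 0 else Complex.exp (-(2*π*Complex.I*d*τ)) * Fterm R α₁ α₂ τ m := by
      funext x
      simp [Function.update_apply]
    rwa [heq] at h0
  rw [Summable.tsum_eq_add_tsum_ite hupd ((-1,-1) : ℤ × ℤ)]
  have hfun : (fun m : ℤ × ℤ => if m = ((-1,-1) : ℤ × ℤ) then 0
      else if m = ((0,0) : ℤ × ℤ) then 0 else Complex.exp (-(2*π*Complex.I*d*τ)) * Fterm R α₁ α₂ τ m)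
      = Gfun R α₁ α₂ d τ := by
    funext m
    rcases eq_or_ne m ((0,0) : ℤ × ℤ) with h | h
    · subst h
      rw [if_neg (by norm_num [Prod.ext_iff] : ¬((0,0) : ℤ × ℤ) = ((-1,-1) : ℤ × ℤ)), if_pos rfl,
        show Gfun R α₁ α₂ d τ (0,0) = 0 from by simp [Gfun]]
    · rcases eq_or_ne m ((-1,-1) : ℤ × ℤ) with h2 | h2
      · subst h2
        rw [if_pos rfl, show Gfun R α₁ α₂ d τ (-1,-1) = 0 from by simp [Gfun]]
      · rw [if_neg h2, if_neg h, show Gfun R α₁ α₂ d τ m = Complex.exp (-(2*π*Complex.I*d*τ)) * Fterm R α₁ α₂ τ m from by rw [Gfun, if_neg (by tauto)]]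
  rw [hfun]
  rw [if_neg (by norm_num [Prod.ext_iff] : ¬((-1,-1) : ℤ × ℤ) = ((0,0) : ℤ × ℤ))]
  ring

set_option maxHeartbeats 4000000 in
/-- Lemma `indef_part_nonprincipal`: an absolute bound for the
nonprincipal part of `e^{−2πidτ} f_{R,α}(τ)` at `τ = h'/k + iw`, `Re w ≥ 1`. -/
theorem stmt15 :
    ∃ C : ℝ, ∀ d : ℝ, 0 ≤ d → d ≤ 1 → ∀ R k : ℕ, 1 ≤ R → 1 ≤ k →
      ∀ h' : ℤ, Int.gcd h' k = 1 → ∀ α₁ α₂ : ℕ, α₁ < R → α₂ < R →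
        ∀ w : ℂ, 1 ≤ w.re →
          ‖
            (Complex.exp (-(2*π*Complex.I*d*((h':ℂ)/k + Complex.I*w)))
                * fInd R ((α₁:ℤ), (α₂:ℤ)) ((h':ℂ)/k + Complex.I*w)
              - (if 0 < (α₁*α₂:ℝ) ∧ (α₁*α₂:ℝ) < (R:ℝ)*d then (1:ℂ) else 0)/2
                  * Complex.exp (2*π*(d - (α₁*α₂:ℝ)/R)*(w - Complex.I*h'/k))
              + (if (((R:ℝ)-α₁)*((R:ℝ)-α₂) : ℝ) < (R:ℝ)*d then (1:ℂ) else 0)/2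
                  * Complex.exp (2*π*(d - (((R:ℝ)-α₁)*((R:ℝ)-α₂))/R)*(w - Complex.I*h'/k)))‖
          ≤ C := by
  classical
  refine ⟨1 + (1/2) * Real.exp (2*π) * ∑' m : ℤ × ℤ, (Real.exp (-(π/2)) ^ m.1.natAbs * Real.exp (-(π/2)) ^ m.2.natAbs), ?_⟩
  intro d hd0 hd1 R k hR hk h' hgcd α₁ α₂ hα₁ hα₂ w hw
  have hRpos : (0:ℝ) < R := by positivity
  have him : (((h':ℂ)/k + Complex.I*w)).im = w.re := by
    simp [Complex.add_im, Complex.div_im, Complex.mul_im]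
  have hτim : 1 ≤ (((h':ℂ)/k + Complex.I*w)).im := by rw [him]; exact hw
  have hτim0 : 0 ≤ (((h':ℂ)/k + Complex.I*w)).im := by linarith
  have hsum := H_summable d hd0 hd1 R hR α₁ α₂ hα₁ hα₂ ((h':ℂ)/k + Complex.I*w) hτim
  rw [fInd_eq R α₁ α₂ ((h':ℂ)/k + Complex.I*w)]
  have hct : Complex.exp (-(2*π*Complex.I*d*((h':ℂ)/k + Complex.I*w))) * ((1/4 : ℂ) * ∑' m : ℤ × ℤ, Fterm R α₁ α₂ ((h':ℂ)/k + Complex.I*w) m)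
      = (1/4 : ℂ) * ∑' m : ℤ × ℤ, Complex.exp (-(2*π*Complex.I*d*((h':ℂ)/k + Complex.I*w))) * Fterm R α₁ α₂ ((h':ℂ)/k + Complex.I*w) m := by
    rw [tsum_mul_left]; ring
  rw [hct, tsum_split d R α₁ α₂ ((h':ℂ)/k + Complex.I*w) hsum]
  have h₁ : ‖(1/4 : ℂ) * (Complex.exp (-(2*π*Complex.I*d*((h':ℂ)/k + Complex.I*w))) * Fterm R α₁ α₂ ((h':ℂ)/k + Complex.I*w) (0,0)) - (if 0 < (α₁*α₂:ℝ) ∧ (α₁*α₂:ℝ) < (R:ℝ)*d then (1:ℂ) else 0)/2 * Complex.exp (2*π*(d - (α₁*α₂:ℝ)/R)*(w - Complex.I*h'/k))‖ ≤ 1/2 := by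
    by_cases hP : 0 < (α₁*α₂:ℝ) ∧ (α₁*α₂:ℝ) < (R:ℝ)*d
    · have hα1 : α₁ ≠ 0 := by
        intro h; rw [h] at hP; simp at hP
      have hα2 : α₂ ≠ 0 := by
        intro h; rw [h] at hP; simp at hP
      have hfin : Complex.exp (-(2*π*Complex.I*d*((h':ℂ)/k + Complex.I*w))) * qpow ((h':ℂ)/k + Complex.I*w) ((α₁*α₂:ℝ)/R) = Complex.exp (2*π*(d - (α₁*α₂:ℝ)/R)*(w - Complex.I*h'/k)) := by
        rw [c_mul_qpow d ((α₁*α₂:ℝ)/R) ((h':ℂ)/k) w]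
        congr 1
        push_cast
        ring
      have hz : (1/4 : ℂ) * (Complex.exp (-(2*π*Complex.I*d*((h':ℂ)/k + Complex.I*w))) * Fterm R α₁ α₂ ((h':ℂ)/k + Complex.I*w) (0,0)) - (if 0 < (α₁*α₂:ℝ) ∧ (α₁*α₂:ℝ) < (R:ℝ)*d then (1:ℂ) else 0)/2 * Complex.exp (2*π*(d - (α₁*α₂:ℝ)/R)*(w - Complex.I*h'/k)) = 0 := by
        rw [Fterm_zero_eval R α₁ α₂ hR ((h':ℂ)/k + Complex.I*w) hα1 hα2, if_pos hP, ← hfin]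
        ring
      rw [hz, norm_zero]; norm_num
    · rw [if_neg hP]
      by_cases hα : α₁ = 0 ∨ α₂ = 0
      · rw [Fterm_zero_zero R α₁ α₂ ((h':ℂ)/k + Complex.I*w) hα]
        simp
      · push_neg at hα
        rw [Fterm_zero_eval R α₁ α₂ hR ((h':ℂ)/k + Complex.I*w) hα.1 hα.2]
        have hpos : (0:ℝ) < (α₁*α₂:ℝ) := by
          have h1 := Nat.pos_of_ne_zero hα.1
          have h2 := Nat.pos_of_ne_zero hα.2
          have : 0 < α₁*α₂ := Nat.mul_pos h1 h2
          exact_mod_cast this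
        have hnlt : ¬ ((α₁*α₂:ℝ) < (R:ℝ)*d) := fun hlt => hP ⟨hpos, hlt⟩
        push_neg at hnlt
        have hde : d ≤ (α₁*α₂:ℝ)/R := by
          rw [le_div_iff₀ hRpos]; linarith
        have habs := abs_c_qpow d ((α₁*α₂:ℝ)/R) ((h':ℂ)/k + Complex.I*w) hde hτim0
        have heq : (1/4 : ℂ) * (Complex.exp (-(2*π*Complex.I*d*((h':ℂ)/k + Complex.I*w))) * (2 * qpow ((h':ℂ)/k + Complex.I*w) ((α₁*α₂:ℝ)/R))) - (0:ℂ)/2 * Complex.exp (2*π*(d - (α₁*α₂:ℝ)/R)*(w - Complex.I*h'/k))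
            = (1/2 : ℂ) * (Complex.exp (-(2*π*Complex.I*d*((h':ℂ)/k + Complex.I*w))) * qpow ((h':ℂ)/k + Complex.I*w) ((α₁*α₂:ℝ)/R)) := by ring
        rw [heq, norm_mul]
        have habs2 : ‖(1/2 : ℂ)‖ = 1/2 := by norm_num [map_div₀]
        rw [habs2]
        linarith
  have h₂ : ‖(1/4 : ℂ) * (Complex.exp (-(2*π*Complex.I*d*((h':ℂ)/k + Complex.I*w))) * Fterm R α₁ α₂ ((h':ℂ)/k + Complex.I*w) (-1,-1)) + (if (((R:ℝ)-α₁)*((R:ℝ)-α₂) : ℝ) < (R:ℝ)*d then (1:ℂ) else 0)/2 * Complex.exp (2*π*(d - (((R:ℝ)-α₁)*((R:ℝ)-α₂))/R)*(w - Complex.I*h'/k))‖ ≤ 1/2 := by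
    rw [Fterm_negone_eval R α₁ α₂ hR hα₁ hα₂ ((h':ℂ)/k + Complex.I*w)]
    by_cases hP : (((R:ℝ)-α₁)*((R:ℝ)-α₂) : ℝ) < (R:ℝ)*d
    · rw [if_pos hP]
      have hfin : Complex.exp (-(2*π*Complex.I*d*((h':ℂ)/k + Complex.I*w))) * qpow ((h':ℂ)/k + Complex.I*w) (((R:ℝ)-α₁)*((R:ℝ)-α₂)/R) = Complex.exp (2*π*(d - (((R:ℝ)-α₁)*((R:ℝ)-α₂))/R)*(w - Complex.I*h'/k)) := by
        rw [c_mul_qpow d (((R:ℝ)-α₁)*((R:ℝ)-α₂)/R) ((h':ℂ)/k) w]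
        congr 1
        push_cast
        ring
      have hz : (1/4 : ℂ) * (Complex.exp (-(2*π*Complex.I*d*((h':ℂ)/k + Complex.I*w))) * (-2 * qpow ((h':ℂ)/k + Complex.I*w) (((R:ℝ)-α₁)*((R:ℝ)-α₂)/R))) + (1:ℂ)/2 * Complex.exp (2*π*(d - (((R:ℝ)-α₁)*((R:ℝ)-α₂))/R)*(w - Complex.I*h'/k)) = 0 := by
        rw [← hfin]
        ring
      rw [hz, norm_zero]; norm_num
    · rw [if_neg hP]
      push_neg at hP
      have hde : d ≤ ((R:ℝ)-α₁)*((R:ℝ)-α₂)/R := by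
        rw [le_div_iff₀ hRpos]; linarith
      have habs := abs_c_qpow d (((R:ℝ)-α₁)*((R:ℝ)-α₂)/R) ((h':ℂ)/k + Complex.I*w) hde hτim0
      have heq : (1/4 : ℂ) * (Complex.exp (-(2*π*Complex.I*d*((h':ℂ)/k + Complex.I*w))) * (-2 * qpow ((h':ℂ)/k + Complex.I*w) (((R:ℝ)-α₁)*((R:ℝ)-α₂)/R))) + (0:ℂ)/2 * Complex.exp (2*π*(d - (((R:ℝ)-α₁)*((R:ℝ)-α₂))/R)*(w - Complex.I*h'/k))
          = -((1/2 : ℂ) * (Complex.exp (-(2*π*Complex.I*d*((h':ℂ)/k + Complex.I*w))) * qpow ((h':ℂ)/k + Complex.I*w) (((R:ℝ)-α₁)*((R:ℝ)-α₂)/R))) := by ring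
      rw [heq, norm_neg, norm_mul]
      have habs2 : ‖(1/2 : ℂ)‖ = 1/2 := by norm_num [map_div₀]
      rw [habs2]
      linarith
  have h₃ : ‖(1/4 : ℂ) * ∑' m : ℤ × ℤ, Gfun R α₁ α₂ d ((h':ℂ)/k + Complex.I*w) m‖ ≤ (1/2) * Real.exp (2*π) * ∑' m : ℤ × ℤ, (Real.exp (-(π/2)) ^ m.1.natAbs * Real.exp (-(π/2)) ^ m.2.natAbs) := by
    rw [norm_mul]
    have habs14 : ‖(1/4 : ℂ)‖ = 1/4 := by norm_num [map_div₀]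
    rw [habs14]
    have hG := abs_tsum_G_le d hd0 hd1 R hR α₁ α₂ hα₁ hα₂ ((h':ℂ)/k + Complex.I*w) hτim
    linarith
  have hsplit2 : (1/4 : ℂ) * (Complex.exp (-(2*π*Complex.I*d*((h':ℂ)/k + Complex.I*w))) * Fterm R α₁ α₂ ((h':ℂ)/k + Complex.I*w) (0,0) + Complex.exp (-(2*π*Complex.I*d*((h':ℂ)/k + Complex.I*w))) * Fterm R α₁ α₂ ((h':ℂ)/k + Complex.I*w) (-1,-1) + ∑' m : ℤ × ℤ, Gfun R α₁ α₂ d ((h':ℂ)/k + Complex.I*w) m) - (if 0 < (α₁*α₂:ℝ) ∧ (α₁*α₂:ℝ) < (R:ℝ)*d then (1:ℂ) else 0)/2 * Complex.exp (2*π*(d - (α₁*α₂:ℝ)/R)*(w - Complex.I*h'/k)) + (if (((R:ℝ)-α₁)*((R:ℝ)-α₂) : ℝ) < (R:ℝ)*d then (1:ℂ) else 0)/2 * Complex.exp (2*π*(d - (((R:ℝ)-α₁)*((R:ℝ)-α₂))/R)*(w - Complex.I*h'/k))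
      = ((1/4 : ℂ) * (Complex.exp (-(2*π*Complex.I*d*((h':ℂ)/k + Complex.I*w))) * Fterm R α₁ α₂ ((h':ℂ)/k + Complex.I*w) (0,0)) - (if 0 < (α₁*α₂:ℝ) ∧ (α₁*α₂:ℝ) < (R:ℝ)*d then (1:ℂ) else 0)/2 * Complex.exp (2*π*(d - (α₁*α₂:ℝ)/R)*(w - Complex.I*h'/k))) + ((1/4 : ℂ) * (Complex.exp (-(2*π*Complex.I*d*((h':ℂ)/k + Complex.I*w))) * Fterm R α₁ α₂ ((h':ℂ)/k + Complex.I*w) (-1,-1)) + (if (((R:ℝ)-α₁)*((R:ℝ)-α₂) : ℝ) < (R:ℝ)*d then (1:ℂ) else 0)/2 * Complex.exp (2*π*(d - (((R:ℝ)-α₁)*((R:ℝ)-α₂))/R)*(w - Complex.I*h'/k)))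
        + (1/4 : ℂ) * ∑' m : ℤ × ℤ, Gfun R α₁ α₂ d ((h':ℂ)/k + Complex.I*w) m := by ring
  rw [hsplit2]
  refine le_trans ((norm_add_le _ _).trans (add_le_add_left (norm_add_le _ _) _)) ?_
  linarith
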